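/- Let K be a field and |·| an archimedean absolute value on K, i.e., an absolute value such that the set {|n·1| : n ∈ ℕ} is unbounded. Let G be a subgroup of the multiplicative group K^× that is open with respect to the metric topology induced by |·|. Then either G = K^×, or P := G ∪ {0} is an ordering of K, i.e., P + P ⊆ P, P·P ⊆ P, P ∪ (−P) = K and P ∩ (−P) = {0}. -/

import Mathlib

section AOV
variable {K : Type*} [Field K] (v : AbsoluteValue K ℝ)

private lemma aov_charZero (harch : ∀ B : ℝ, ∃ n : ℕ, B < v (n : K)) : CharZero K := by
  have hpos : ∀ k : ℕ, 0 < k → (k : K) ≠ 0 := by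
    intro k hk hk0
    set B : ℝ := ∑ j ∈ Finset.range k, v (j : K) with hB
    obtain ⟨n, hn⟩ := harch B
    have hmod : (n : K) = ((n % k : ℕ) : K) := by
      conv_lhs => rw [← Nat.div_add_mod n k]
      push_cast
      rw [hk0]; ring
    have hle : v ((n % k : ℕ) : K) ≤ B := by
      refine Finset.single_le_sum (fun j _ => v.nonneg _) ?_
      exact Finset.mem_range.mpr (Nat.mod_lt _ hk)
    rw [hmod] at hn; linarith
  refine ⟨fun m n h => ?_⟩
  rcases lt_trichotomy m n with hmn | hmn | hmn
  · exfalso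
    apply hpos (n - m) (by omega)
    rw [Nat.cast_sub hmn.le, h, sub_self]
  · exact hmn
  · exfalso
    apply hpos (m - n) (by omega)
    rw [Nat.cast_sub hmn.le, ← h, sub_self]

private lemma aov_pow [CharZero K] (harch : ∀ B : ℝ, ∃ n : ℕ, B < v (n : K)) :
    ∃ t : ℝ, 0 < t ∧ ∀ q : ℚ, v (q : K) = |(q : ℝ)| ^ t := by
  set F : AbsoluteValue ℚ ℝ :=
    { toFun := fun q => v (q : K)
      nonneg' := fun a => v.nonneg _
      add_le' := fun a b => by push_cast; exact v.add_le _ _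
      map_mul' := fun a b => by push_cast; exact v.map_mul _ _
      eq_zero' := fun a => by
        constructor
        · intro ha
          have : (a : K) = 0 := v.eq_zero.mp ha
          exact_mod_cast this
        · rintro rfl; simp } with hF
  have hFq : ∀ q : ℚ, F q = v (q : K) := fun q => rfl
  have notbdd : ¬ ∀ n : ℕ, F n ≤ 1 := by
    push_neg
    obtain ⟨n, hn⟩ := harch 1
    exact ⟨n, by rw [hFq]; push_cast; linarith⟩
  obtain ⟨c, hc, heq⟩ :=
    AbsoluteValue.isEquiv_iff_exists_rpow_eq.mp (Rat.AbsoluteValue.equiv_real_of_unbounded notbdd)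
  refine ⟨c⁻¹, by positivity, fun q => ?_⟩
  have h1 : (F q) ^ c = |(q : ℝ)| := by
    have := congrFun heq q
    simp only [Rat.AbsoluteValue.real_eq_abs] at this
    exact_mod_cast this
  have h2 : ((F q) ^ c) ^ c⁻¹ = F q :=
    Real.rpow_rpow_inv (by positivity) hc.ne'
  rw [← hFq q, ← h2, h1]
variable {K : Type*} [Field K] (v : AbsoluteValue K ℝ)

private lemma aov_chain (S : Set K) (ε : ℝ)
    (hball : ∀ x : K, v (x - 1) < ε → x ∈ S)
    (hmul : ∀ x ∈ S, ∀ y ∈ S, x * y ∈ S) (h1 : (1 : K) ∈ S)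
    (δ : ℝ) (hδ : 0 < δ) :
    ∀ (m : ℕ) (z : ℕ → K), (∀ k ≤ m, δ ≤ v (z k)) →
      (∀ k < m, v (z (k + 1) - z k) < δ * ε) → z m * (z 0)⁻¹ ∈ S := by
  intro m
  induction m with
  | zero =>
    intro z hz _
    have h0 : z 0 ≠ 0 := by
      intro h
      have := hz 0 le_rfl
      rw [h, v.map_zero] at this; linarith
    rw [mul_inv_cancel₀ h0]; exact h1
  | succ n ih =>
    intro z hz hstep
    have hzn : z n ≠ 0 := by
      intro h
      have := hz n (by omega)
      rw [h, v.map_zero] at this; linarith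
    have hvzn : 0 < v (z n) := v.pos hzn
    have hratio : z (n + 1) * (z n)⁻¹ ∈ S := by
      apply hball
      have hrw : z (n + 1) * (z n)⁻¹ - 1 = (z (n + 1) - z n) * (z n)⁻¹ := by
        field_simp
      rw [hrw, v.map_mul, map_inv₀]
      have hlt : v (z (n + 1) - z n) < δ * ε := hstep n (by omega)
      have hδle : δ ≤ v (z n) := hz n (by omega)
      calc v (z (n + 1) - z n) * (v (z n))⁻¹ < (δ * ε) * (v (z n))⁻¹ := by
            apply mul_lt_mul_of_pos_right hlt (by positivity)
        _ ≤ (δ * ε) * δ⁻¹ := by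
            apply mul_le_mul_of_nonneg_left _ (by nlinarith [hδ.le, (hz n (by omega : n ≤ n+1)), v.nonneg (z (n+1) - z n)])
            · exact inv_anti₀ hδ hδle
        _ = ε * (δ * δ⁻¹) := by ring
        _ ≤ ε := by rw [mul_inv_cancel₀ hδ.ne', mul_one]
    have htail := ih z (fun k hk => hz k (by omega)) (fun k hk => hstep k (by omega))
    have hsplit : z (n + 1) * (z 0)⁻¹ = (z (n + 1) * (z n)⁻¹) * (z n * (z 0)⁻¹) := by
      field_simp
    rw [hsplit]
    exact hmul _ hratio _ htail
variable {K : Type*} [Field K] (v : AbsoluteValue K ℝ)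

private lemma aov_posrat [CharZero K] (t : ℝ) (ht : 0 < t)
    (hv : ∀ q : ℚ, v (q : K) = |(q : ℝ)| ^ t)
    (S : Set K) (ε : ℝ) (hε : 0 < ε)
    (hball : ∀ x : K, v (x - 1) < ε → x ∈ S)
    (hmul : ∀ x ∈ S, ∀ y ∈ S, x * y ∈ S) (h1 : (1 : K) ∈ S)
    (hinv : ∀ x ∈ S, x⁻¹ ∈ S) :
    ∀ q : ℚ, 0 < q → (q : K) ∈ S := by
  -- find a small positive rational η with η^t < ε
  obtain ⟨η, hη0, hηε⟩ : ∃ η : ℚ, 0 < η ∧ ((η : ℝ)) ^ t < ε := by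
    obtain ⟨η, hη1, hη2⟩ := exists_rat_btwn (show (0:ℝ) < min 1 (ε ^ t⁻¹) by
      apply lt_min one_pos
      exact Real.rpow_pos_of_pos hε _)
    have hη0 : (0:ℝ) < η := hη1
    refine ⟨η, by exact_mod_cast hη0, ?_⟩
    have hlt : (η : ℝ) < ε ^ t⁻¹ := lt_of_lt_of_le hη2 (min_le_right _ _)
    calc (η:ℝ) ^ t < (ε ^ t⁻¹) ^ t := Real.rpow_lt_rpow hη0.le hlt ht
      _ = ε := by
          rw [← Real.rpow_mul hε.le, inv_mul_cancel₀ ht.ne', Real.rpow_one]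
  have hball' : ∀ q : ℚ, 1 ≤ q → q ≤ 1 + η → (q : K) ∈ S := by
    intro q h1q hq
    apply hball
    have : ((q : K) - 1) = (((q - 1 : ℚ)) : K) := by push_cast; ring
    rw [this, hv]
    have h0 : (0:ℝ) ≤ (q:ℝ) - 1 := by exact_mod_cast sub_nonneg.mpr h1q
    have habs : |((q - 1 : ℚ) : ℝ)| ≤ (η : ℝ) := by
      push_cast
      rw [abs_of_nonneg h0]
      have : (q : ℝ) ≤ 1 + η := by exact_mod_cast hq
      linarith
    calc |((q - 1 : ℚ) : ℝ)| ^ t ≤ (η:ℝ) ^ t := by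
          apply Real.rpow_le_rpow (abs_nonneg _) habs ht.le
      _ < ε := hηε
  have key : ∀ n : ℕ, ∀ q : ℚ, 1 ≤ q → q ≤ (1 + η) ^ n → (q : K) ∈ S := by
    intro n
    induction n with
    | zero =>
      intro q h1q hq
      simp only [pow_zero] at hq
      have : q = 1 := le_antisymm hq h1q
      rw [this]; exact_mod_cast h1
    | succ n ih =>
      intro q h1q hq
      by_cases hcase : q ≤ 1 + η
      · exact hball' q h1q hcase
      · push_neg at hcase
        have h1η : (0:ℚ) < 1 + η := by linarith
        have hq' : 1 ≤ q / (1 + η) := by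
          rw [le_div_iff₀ h1η]; linarith
        have hq'' : q / (1 + η) ≤ (1 + η) ^ n := by
          rw [div_le_iff₀ h1η, pow_succ] at *
          linarith [hq]
        have hmem := ih (q / (1 + η)) hq' hq''
        have hmem2 : ((1 + η : ℚ) : K) ∈ S := hball' _ (by linarith) le_rfl
        have : (q : K) = ((q / (1 + η) : ℚ) : K) * ((1 + η : ℚ) : K) := by
          push_cast
          rw [div_mul_cancel₀]
          exact_mod_cast h1η.ne'
        rw [this]
        exact hmul _ hmem _ hmem2
  intro q hq
  rcases le_or_gt 1 q with h1q | hq1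
  · obtain ⟨n, hn⟩ := pow_unbounded_of_one_lt q (by linarith : (1:ℚ) < 1 + η)
    exact key n q h1q hn.le
  · have hinvq : 1 ≤ q⁻¹ := by
      rw [le_inv_comm₀ one_pos hq]; simpa using hq1.le
    obtain ⟨n, hn⟩ := pow_unbounded_of_one_lt q⁻¹ (by linarith : (1:ℚ) < 1 + η)
    have := hinv _ (key n q⁻¹ hinvq hn.le)
    rw [Rat.cast_inv, inv_inv] at this
    exact this

private lemma aov_pick_m [CharZero K] (harch : ∀ B : ℝ, ∃ n : ℕ, B < v (n : K)) (C : ℝ) :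
    ∃ m : ℕ, (m : ℚ) ≠ 0 ∧ 0 < v ((m : ℕ) : K) ∧ C < v ((m : ℕ) : K) := by
  obtain ⟨m, hm⟩ := harch (max C 1)
  have h1 : (1:ℝ) < v ((m:ℕ) : K) := lt_of_le_of_lt (le_max_right _ _) hm
  have hm0 : m ≠ 0 := by
    intro h; rw [h] at h1; simp [v.map_zero] at h1; linarith
  exact ⟨m, by exact_mod_cast hm0, by linarith,
    lt_of_le_of_lt (le_max_left _ _) hm⟩

private lemma aov_posS [CharZero K] (harch : ∀ B : ℝ, ∃ n : ℕ, B < v (n : K))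
    (t : ℝ) (ht : 0 < t)
    (hv : ∀ q : ℚ, v (q : K) = |(q : ℝ)| ^ t)
    (S : Set K) (ε : ℝ) (hε : 0 < ε)
    (hball : ∀ x : K, v (x - 1) < ε → x ∈ S)
    (hmul : ∀ x ∈ S, ∀ y ∈ S, x * y ∈ S) (h1 : (1 : K) ∈ S)
    (hinv : ∀ x ∈ S, x⁻¹ ∈ S) :
    ∀ (a : K) (r : ℚ), 0 < r → v (a - (r : K)) < v ((r : ℚ) : K) → a ∈ S := by
  intro a r hr hlt
  have hrK : ((r : ℚ) : K) ≠ 0 := by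
    exact_mod_cast Rat.cast_ne_zero.mpr hr.ne'
  have hvr : 0 < v ((r : ℚ) : K) := v.pos hrK
  set b : K := a * ((r : ℚ) : K)⁻¹ with hb
  set θ : ℝ := v (b - 1) with hθdef
  have hθnn : 0 ≤ θ := v.nonneg _
  have hθ : θ < 1 := by
    have hbeq : b - 1 = (a - (r : K)) * ((r : ℚ) : K)⁻¹ := by
      rw [hb, sub_mul, mul_inv_cancel₀ hrK]
    rw [hθdef, hbeq, v.map_mul, map_inv₀, ← div_eq_mul_inv]
    exact (div_lt_one hvr).mpr hlt
  set δ : ℝ := 1 - θ with hδdef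
  have hδ : 0 < δ := by simp only [hδdef]; linarith
  obtain ⟨m, hmQ, hvm, hmC⟩ := aov_pick_m v harch (θ / (δ * ε))
  set z : ℕ → K := fun k => 1 + (((k : ℚ) / (m : ℚ) : ℚ) : K) * (b - 1) with hz
  have hbound : ∀ k ≤ m, δ ≤ v (z k) := by
    intro k hk
    have hsle : v ((((k : ℚ) / (m : ℚ)) : ℚ) : K) ≤ 1 := by
      rw [hv]
      apply Real.rpow_le_one (abs_nonneg _) _ ht.le
      rw [abs_le]
      constructor
      · push_cast
        have hk0 : (0:ℝ) ≤ (k:ℝ)/(m:ℝ) := by positivity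
        linarith
      · push_cast
        have hmpos : (0:ℝ) < (m:ℝ) := by
          have : m ≠ 0 := by exact_mod_cast hmQ
          exact_mod_cast Nat.pos_of_ne_zero this
        rw [div_le_one hmpos]
        exact_mod_cast hk
    have htri : v (1:K) - v (-((((k : ℚ) / (m : ℚ)) : ℚ) : K) * (b - 1)) ≤ v (z k) := by
      have := v.le_sub 1 (-((((k : ℚ) / (m : ℚ)) : ℚ) : K) * (b - 1))
      have heq : (1:K) - (-((((k : ℚ) / (m : ℚ)) : ℚ) : K) * (b - 1)) = z k := by
        simp only [hz]; ring
      rwa [heq] at this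
    rw [v.map_one] at htri
    have hvneg : v (-((((k : ℚ) / (m : ℚ)) : ℚ) : K) * (b - 1))
        = v ((((k : ℚ) / (m : ℚ)) : ℚ) : K) * θ := by
      rw [show (-((((k : ℚ) / (m : ℚ)) : ℚ) : K) * (b - 1))
          = -(((((k : ℚ) / (m : ℚ)) : ℚ) : K) * (b - 1)) by ring, v.map_neg, v.map_mul]
    rw [hvneg] at htri
    nlinarith [mul_le_one₀ hsle hθnn hθ.le]
  have hstep : ∀ k < m, v (z (k + 1) - z k) < δ * ε := by
    intro k _
    have heq : z (k + 1) - z k = ((m : ℕ) : K)⁻¹ * (b - 1) := by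
      simp only [hz]
      push_cast
      ring
    rw [heq, v.map_mul, map_inv₀]
    calc (v ((m:ℕ):K))⁻¹ * v (b-1) = θ / v ((m:ℕ):K) := by
            rw [hθdef]; field_simp
        _ < δ * ε := by
            rw [div_lt_iff₀ hvm]
            by_cases hθ0 : θ = 0
            · rw [hθ0]; positivity
            · have hθpos : 0 < θ := lt_of_le_of_ne hθnn (Ne.symm hθ0)
              have := (div_lt_iff₀ (by positivity : (0:ℝ) < δ * ε)).mp hmC
              nlinarith
  have hchain := aov_chain v S ε hball hmul h1 δ hδ m z hbound hstep
  have hzm : z m = b := by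
    simp only [hz, div_self hmQ]
    push_cast
    ring
  have hz0 : z 0 = 1 := by simp [hz]
  rw [hzm, hz0, inv_one, mul_one] at hchain
  have hrS : ((r : ℚ) : K) ∈ S :=
    aov_posrat v t ht hv S ε hε hball hmul h1 hinv r hr
  have : a = b * ((r : ℚ) : K) := by
    rw [hb]; field_simp
  rw [this]
  exact hmul _ hchain _ hrS

private lemma aov_total [CharZero K] (harch : ∀ B : ℝ, ∃ n : ℕ, B < v (n : K))
    (t : ℝ) (ht : 0 < t)
    (hv : ∀ q : ℚ, v (q : K) = |(q : ℝ)| ^ t)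
    (S : Set K) (ε : ℝ) (hε : 0 < ε)
    (hball : ∀ x : K, v (x - 1) < ε → x ∈ S)
    (hmul : ∀ x ∈ S, ∀ y ∈ S, x * y ∈ S) (h1 : (1 : K) ∈ S)
    (hinv : ∀ x ∈ S, x⁻¹ ∈ S) :
    ∀ a : K, a ≠ 0 → a ∈ S ∨ ∃ r : ℚ, 0 < r ∧ v (-a - (r : K)) < v ((r : ℚ) : K) := by
  intro a ha
  set θ : ℝ := v (a - 1) with hθdef
  have hθnn : 0 ≤ θ := v.nonneg _
  by_cases hθ0 : θ = 0
  · left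
    have : a - 1 = 0 := v.eq_zero.mp hθ0
    have : a = 1 := by linear_combination this
    rw [this]; exact h1
  have hθpos : 0 < θ := lt_of_le_of_ne hθnn (Ne.symm hθ0)
  have hva : 0 < v a := v.pos ha
  set δ : ℝ := min 1 (v a) / (2 * (1 + θ)) with hδdef
  have hδ : 0 < δ := by
    apply div_pos (lt_min one_pos hva) (by linarith)
  have hδhalf : δ ≤ 1 / 2 := by
    rw [hδdef, div_le_div_iff₀ (by linarith) (by norm_num)]
    have h1' : min 1 (v a) ≤ 1 := min_le_left _ _
    nlinarith
  have hδva : δ * (1 + θ) ≤ v a := by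
    have : δ * (2 * (1 + θ)) = min 1 (v a) := by
      rw [hδdef]; field_simp
    nlinarith [min_le_right 1 (v a)]
  obtain ⟨m, hmQ, hvm, hmC⟩ := aov_pick_m v harch (θ / (δ * ε))
  have hmpos : 0 < m := by
    by_contra h
    have : m = 0 := by omega
    rw [this] at hmQ; simp at hmQ
  set z : ℕ → K := fun k => 1 + (((k : ℚ) / (m : ℚ) : ℚ) : K) * (a - 1) with hz
  by_cases hcase : ∀ k ≤ m, δ ≤ v (z k)
  · left
    have hstep : ∀ k < m, v (z (k + 1) - z k) < δ * ε := by
      intro k _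
      have heq : z (k + 1) - z k = ((m : ℕ) : K)⁻¹ * (a - 1) := by
        simp only [hz]; push_cast; ring
      rw [heq, v.map_mul, map_inv₀]
      calc (v ((m:ℕ):K))⁻¹ * v (a-1) = θ / v ((m:ℕ):K) := by
            rw [hθdef]; field_simp
        _ < δ * ε := by
            rw [div_lt_iff₀ hvm]
            have := (div_lt_iff₀ (by positivity : (0:ℝ) < δ * ε)).mp hmC
            nlinarith
    have hchain := aov_chain v S ε hball hmul h1 δ hδ m z hcase hstep
    have hzm : z m = a := by
      simp only [hz, div_self hmQ]; push_cast; ring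
    have hz0 : z 0 = 1 := by simp [hz]
    rwa [hzm, hz0, inv_one, mul_one] at hchain
  · right
    push_neg at hcase
    obtain ⟨k, hkm, hklt⟩ := hcase
    have hk0 : k ≠ 0 := by
      intro h
      rw [h] at hklt
      have : z 0 = 1 := by simp [hz]
      rw [this, v.map_one] at hklt
      linarith
    have hkm' : k ≠ m := by
      intro h
      rw [h] at hklt
      have : z m = a := by simp only [hz, div_self hmQ]; push_cast; ring
      rw [this] at hklt
      nlinarith
    set s : ℚ := (k : ℚ) / (m : ℚ) with hsdef
    have hs0 : 0 < s := by
      apply div_pos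
      · exact_mod_cast Nat.pos_of_ne_zero hk0
      · exact_mod_cast hmpos
    have hs1 : s < 1 := by
      rw [hsdef, div_lt_one (by exact_mod_cast hmpos)]
      exact_mod_cast lt_of_le_of_ne hkm hkm'
    set r : ℚ := (1 - s) / s with hrdef
    have hr : 0 < r := div_pos (by linarith) hs0
    refine ⟨r, hr, ?_⟩
    have hsK : ((s : ℚ) : K) ≠ 0 := by
      exact_mod_cast Rat.cast_ne_zero.mpr hs0.ne'
    have hvs : 0 < v ((s : ℚ) : K) := v.pos hsK
    -- z k = a - (1-s)(a-1)
    have hzk2 : z k = a - (((1 - s : ℚ)) : K) * (a - 1) := by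
      simp only [hz, hsdef]; push_cast; ring
    have htri : v a - v ((((1 - s : ℚ)) : K) * (a - 1)) ≤ v (z k) := by
      have := v.le_sub a ((((1 - s : ℚ)) : K) * (a - 1))
      rwa [← hzk2] at this
    rw [v.map_mul, ← hθdef] at htri
    have hδs : δ ≤ v (((1 - s : ℚ)) : K) := by
      have h1' : v (((1 - s : ℚ)) : K) * θ ≥ v a - δ := by nlinarith
      have h2' : v a - δ ≥ δ * θ := by nlinarith
      exact le_of_mul_le_mul_right (le_trans h2' h1') hθpos
    have hkK : ((k : ℕ) : K) ≠ 0 := Nat.cast_ne_zero.mpr hk0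
    have hmK : ((m : ℕ) : K) ≠ 0 := Nat.cast_ne_zero.mpr (by omega)
    have hid : -a - ((r : ℚ) : K) = -(z k) * (((s : ℚ) : K))⁻¹ := by
      simp only [hz, hrdef, hsdef]
      push_cast
      field_simp
      ring
    have hvr : v ((r : ℚ) : K) = v (((1 - s : ℚ)) : K) * (v (((s : ℚ) : K)))⁻¹ := by
      have hmulid : ((r : ℚ) : K) * ((s : ℚ) : K) = (((1 - s : ℚ)) : K) := by
        have : r * s = 1 - s := by rw [hrdef]; field_simp
        exact_mod_cast congrArg (fun x : ℚ => (x : K)) this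
      rw [← div_eq_mul_inv, eq_div_iff hvs.ne', ← v.map_mul, hmulid]
    rw [hid, v.map_mul, v.map_neg, map_inv₀, hvr]
    apply mul_lt_mul_of_pos_right _ (by positivity)
    exact lt_of_lt_of_le hklt hδs

private lemma aov_noimag [CharZero K] (harch : ∀ B : ℝ, ∃ n : ℕ, B < v (n : K))
    (t : ℝ) (ht : 0 < t)
    (hv : ∀ q : ℚ, v (q : K) = |(q : ℝ)| ^ t)
    (S : Set K) (ε : ℝ) (hε : 0 < ε)
    (hball : ∀ x : K, v (x - 1) < ε → x ∈ S)
    (hmul : ∀ x ∈ S, ∀ y ∈ S, x * y ∈ S) (h1 : (1 : K) ∈ S)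
    (a : K) (ha : a ≠ 0)
    (hpa : ∀ r : ℚ, 0 < r → v ((r : ℚ) : K) ≤ v (a - (r : K)))
    (hna : ∀ r : ℚ, 0 < r → v ((r : ℚ) : K) ≤ v (-a - (r : K))) :
    (-1 : K) ∈ S := by
  set c : ℝ := v a / 2 with hcdef
  have hva : 0 < v a := v.pos ha
  have hc : 0 < c := by rw [hcdef]; linarith
  have hvneg : ∀ q : ℚ, v (((-q : ℚ)) : K) = v ((q : ℚ) : K) := by
    intro q; push_cast; exact v.map_neg _
  have B2 : ∀ q : ℚ, q ≠ 0 → v ((q : ℚ) : K) ≤ v (a - (q : K)) := by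
    intro q hq
    rcases lt_or_gt_of_ne hq with hq' | hq'
    · have := hna (-q) (by linarith)
      rw [hvneg] at this
      have heq : -a - ((-q : ℚ) : K) = -(a - (q : K)) := by push_cast; ring
      rw [heq, v.map_neg] at this
      exact this
    · exact hpa q hq'
  have B1 : ∀ q : ℚ, c ≤ v (a - (q : K)) := by
    intro q
    by_cases hq : q = 0
    · rw [hq]; push_cast; rw [sub_zero]; linarith
    by_cases hvq : v ((q : ℚ) : K) ≤ c
    · have := v.le_sub a ((q : ℚ) : K)
      have : v a - v ((q : ℚ) : K) ≤ v (a - (q : K)) := this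
      linarith
    · push_neg at hvq
      exact le_trans hvq.le (B2 q hq)
  have Blin : ∀ r s : ℚ, s ≠ 0 →
      v ((r : ℚ) : K) ≤ v ((r : K) + (s : K) * a) ∧
      c * v ((s : ℚ) : K) ≤ v ((r : K) + (s : K) * a) := by
    intro r s hs
    have hsK : ((s : ℚ) : K) ≠ 0 := Rat.cast_ne_zero.mpr hs
    have hvs : 0 < v ((s : ℚ) : K) := v.pos hsK
    set q : ℚ := -r / s with hqdef
    have hid : (r : K) + (s : K) * a = (s : K) * (a - (q : K)) := by
      rw [hqdef]; push_cast; field_simp; ring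
    rw [hid, v.map_mul]
    constructor
    · by_cases hr : r = 0
      · rw [hr]; push_cast; rw [v.map_zero]; positivity
      · have hq0 : q ≠ 0 := by
          rw [hqdef]; exact div_ne_zero (neg_ne_zero.mpr hr) hs
        have h1' := B2 q hq0
        have h2' : v ((s : ℚ) : K) * v ((q : ℚ) : K) = v ((r : ℚ) : K) := by
          rw [← v.map_mul]
          have : (s : K) * (q : K) = ((-r : ℚ) : K) := by
            rw [hqdef]; push_cast; field_simp
          rw [this, hvneg]
        calc v ((r : ℚ) : K) = v ((s : ℚ) : K) * v ((q : ℚ) : K) := h2'.symm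
          _ ≤ v ((s : ℚ) : K) * v (a - (q : K)) := by
              apply mul_le_mul_of_nonneg_left h1' hvs.le
    · rw [mul_comm]
      apply mul_le_mul_of_nonneg_left (B1 q) hvs.le
  have hmono : ∀ p q : ℚ, 0 ≤ p → p ≤ q → v ((p : ℚ) : K) ≤ v ((q : ℚ) : K) := by
    intro p q hp hpq
    rw [hv, hv]
    apply Real.rpow_le_rpow (abs_nonneg _) _ ht.le
    rw [abs_of_nonneg (by exact_mod_cast hp : (0:ℝ) ≤ (p:ℝ)),
      abs_of_nonneg (by push_cast; exact_mod_cast le_trans hp hpq)]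
    exact_mod_cast hpq
  set w : ℝ := v (((1/2 : ℚ)) : K) with hwdef
  have hw0 : 0 < w := v.pos (Rat.cast_ne_zero.mpr (by norm_num))
  have hw1 : w ≤ 1 := by
    rw [hwdef, hv]
    apply Real.rpow_le_one (abs_nonneg _) _ ht.le
    rw [abs_le]; constructor <;> norm_num
  set δ : ℝ := min 1 c * w with hδdef
  have hδ : 0 < δ := by
    apply mul_pos (lt_min one_pos hc) hw0
  have hδ1 : δ ≤ 1 := by
    calc δ ≤ 1 * w := by
          apply mul_le_mul_of_nonneg_right (min_le_left _ _) hw0.le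
      _ ≤ 1 := by linarith
  have hδc : δ ≤ c := by
    calc δ ≤ c * w := mul_le_mul_of_nonneg_right (min_le_right _ _) hw0.le
      _ ≤ c * 1 := mul_le_mul_of_nonneg_left hw1 hc.le
      _ = c := mul_one c
  have hδw : δ ≤ w := by
    calc δ ≤ 1 * w := mul_le_mul_of_nonneg_right (min_le_left _ _) hw0.le
      _ = w := one_mul w
  have hδcw : δ ≤ c * w := mul_le_mul_of_nonneg_right (min_le_right _ _) hw0.le
  obtain ⟨m, hmQ, hvm, hmC⟩ := aov_pick_m v harch ((v (a - 1) + v (1 + a)) / (δ * ε))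
  have hm0 : m ≠ 0 := by exact_mod_cast hmQ
  have hmpos : 0 < m := Nat.pos_of_ne_zero hm0
  have hstepbound : ∀ x : K, v x ≤ v (a - 1) + v (1 + a) →
      v (((m : ℕ) : K))⁻¹ * v x < δ * ε := by
    intro x hx
    rw [map_inv₀]
    have h2' := (div_lt_iff₀ (by positivity : (0:ℝ) < δ * ε)).mp hmC
    have hvx : 0 ≤ v x := v.nonneg _
    rw [inv_mul_eq_div, div_lt_iff₀ hvm]
    nlinarith
  -- the half comparisons
  have hhalf : ∀ k : ℕ, k ≤ m → 2 * k ≥ m → w ≤ v ((((k : ℚ) / (m : ℚ)) : ℚ) : K) := by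
    intro k hk h2k
    apply hmono (1/2) ((k : ℚ) / (m : ℚ)) (by norm_num)
    rw [div_le_div_iff₀ (by norm_num) (by exact_mod_cast hmpos)]
    push_cast
    have : (m : ℚ) ≤ 2 * k := by exact_mod_cast h2k
    linarith
  have hhalf' : ∀ k : ℕ, 2 * k ≤ m → w ≤ v (((1 - (k : ℚ) / (m : ℚ)) : ℚ) : K) := by
    intro k h2k
    apply hmono (1/2) (1 - (k : ℚ) / (m : ℚ)) (by norm_num)
    have hkm2 : (k : ℚ) / (m : ℚ) ≤ 1/2 := by
      rw [div_le_div_iff₀ (by exact_mod_cast hmpos : (0:ℚ) < (m:ℚ)) (by norm_num : (0:ℚ) < 2)]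
      have : (2 : ℚ) * k ≤ m := by exact_mod_cast h2k
      linarith
    linarith
  -- Segment 1 : from 1 to a
  set z1 : ℕ → K := fun k => 1 + (((k : ℚ) / (m : ℚ) : ℚ) : K) * (a - 1) with hz1
  have hbound1 : ∀ k ≤ m, δ ≤ v (z1 k) := by
    intro k hk
    by_cases hk0 : k = 0
    · have : z1 k = 1 := by rw [hk0]; simp [hz1]
      rw [this, v.map_one]; exact hδ1
    have hs : ((k : ℚ) / (m : ℚ)) ≠ 0 := by
      apply div_ne_zero
      · exact_mod_cast hk0
      · exact hmQ
    have hrw : z1 k = (((1 - (k : ℚ) / (m : ℚ)) : ℚ) : K)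
        + ((((k : ℚ) / (m : ℚ)) : ℚ) : K) * a := by
      simp only [hz1]; push_cast; ring
    have hB := Blin (1 - (k : ℚ) / (m : ℚ)) ((k : ℚ) / (m : ℚ)) hs
    rw [← hrw] at hB
    rcases le_or_gt m (2 * k) with h2k | h2k
    · calc δ ≤ c * w := hδcw
        _ ≤ c * v ((((k : ℚ) / (m : ℚ)) : ℚ) : K) :=
            mul_le_mul_of_nonneg_left (hhalf k hk h2k) hc.le
        _ ≤ v (z1 k) := hB.2
    · calc δ ≤ w := hδw
        _ ≤ v (((1 - (k : ℚ) / (m : ℚ)) : ℚ) : K) := hhalf' k h2k.le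
        _ ≤ v (z1 k) := hB.1
  have hstep1 : ∀ k < m, v (z1 (k + 1) - z1 k) < δ * ε := by
    intro k _
    have heq : z1 (k + 1) - z1 k = ((m : ℕ) : K)⁻¹ * (a - 1) := by
      simp only [hz1]; push_cast; ring
    rw [heq, v.map_mul, map_inv₀, ← map_inv₀ v]
    apply hstepbound _ (by linarith [v.nonneg (1 + a)])
  have hchain1 := aov_chain v S ε hball hmul h1 δ hδ m z1 hbound1 hstep1
  have hz1m : z1 m = a := by
    simp only [hz1, div_self hmQ]; push_cast; ring
  have hz10 : z1 0 = 1 := by simp [hz1]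
  rw [hz1m, hz10, inv_one, mul_one] at hchain1
  -- Segment 2 : from a to -1
  set z2 : ℕ → K := fun k => a + (((k : ℚ) / (m : ℚ) : ℚ) : K) * (-1 - a) with hz2
  have hbound2 : ∀ k ≤ m, δ ≤ v (z2 k) := by
    intro k hk
    by_cases hk0 : k = 0
    · have : z2 k = a := by rw [hk0]; simp [hz2]
      rw [this]; linarith [hδc, hc]
    by_cases hkm : k = m
    · have : z2 k = -1 := by
        rw [hkm]; simp only [hz2, div_self hmQ]; push_cast; ring
      rw [this, v.map_neg, v.map_one]; exact hδ1
    have hs : (1 - (k : ℚ) / (m : ℚ)) ≠ 0 := by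
      have hlt : ((k : ℚ) / (m : ℚ)) < 1 := by
        rw [div_lt_one (by exact_mod_cast hmpos : (0:ℚ) < (m:ℚ))]
        exact_mod_cast lt_of_le_of_ne hk hkm
      intro h
      rw [sub_eq_zero] at h
      rw [← h] at hlt
      exact lt_irrefl _ hlt
    have hrw : z2 k = (((-((k : ℚ) / (m : ℚ))) : ℚ) : K)
        + (((1 - (k : ℚ) / (m : ℚ)) : ℚ) : K) * a := by
      simp only [hz2]; push_cast; ring
    have hB := Blin (-((k : ℚ) / (m : ℚ))) (1 - (k : ℚ) / (m : ℚ)) hs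
    rw [← hrw] at hB
    rcases le_or_gt m (2 * k) with h2k | h2k
    · calc δ ≤ w := hδw
        _ ≤ v ((((k : ℚ) / (m : ℚ)) : ℚ) : K) := hhalf k hk h2k
        _ = v (((-((k : ℚ) / (m : ℚ))) : ℚ) : K) := (hvneg _).symm
        _ ≤ v (z2 k) := hB.1
    · calc δ ≤ c * w := hδcw
        _ ≤ c * v (((1 - (k : ℚ) / (m : ℚ)) : ℚ) : K) :=
            mul_le_mul_of_nonneg_left (hhalf' k h2k.le) hc.le
        _ ≤ v (z2 k) := hB.2
  have hstep2 : ∀ k < m, v (z2 (k + 1) - z2 k) < δ * ε := by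
    intro k _
    have heq : z2 (k + 1) - z2 k = ((m : ℕ) : K)⁻¹ * (-1 - a) := by
      simp only [hz2]; push_cast; ring
    rw [heq, v.map_mul, map_inv₀, ← map_inv₀ v]
    have : v (-1 - a) = v (1 + a) := by
      rw [show (-1 - a : K) = -(1 + a) by ring, v.map_neg]
    rw [this]
    apply hstepbound _ (by linarith [v.nonneg (a - 1)])
  have hchain2 := aov_chain v S ε hball hmul h1 δ hδ m z2 hbound2 hstep2
  have hz2m : z2 m = -1 := by
    simp only [hz2, div_self hmQ]; push_cast; ring
  have hz20 : z2 0 = a := by simp [hz2]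
  rw [hz2m, hz20] at hchain2
  have : (-1 : K) = ((-1 : K) * a⁻¹) * a := by field_simp
  rw [this]
  exact hmul _ hchain2 _ hchain1

end AOV


theorem open_mulSubgroup_eq_top_or_ordering_of_archimedean_absoluteValue
    {K : Type*} [Field K] (v : AbsoluteValue K ℝ)
    (harch : ∀ B : ℝ, ∃ n : ℕ, B < v (n : K))
    (G : Subgroup Kˣ)
    (hopen : ∀ g ∈ G, ∃ ε : ℝ, 0 < ε ∧
      ∀ x : K, v (x - (g : K)) < ε → ∃ u ∈ G, (u : K) = x) :
    G = ⊤ ∨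
      ((∀ x ∈ {x : K | (∃ u ∈ G, (u : K) = x) ∨ x = 0},
          ∀ y ∈ {x : K | (∃ u ∈ G, (u : K) = x) ∨ x = 0},
            x + y ∈ {x : K | (∃ u ∈ G, (u : K) = x) ∨ x = 0}) ∧
       (∀ x ∈ {x : K | (∃ u ∈ G, (u : K) = x) ∨ x = 0},
          ∀ y ∈ {x : K | (∃ u ∈ G, (u : K) = x) ∨ x = 0},
            x * y ∈ {x : K | (∃ u ∈ G, (u : K) = x) ∨ x = 0}) ∧
       (∀ x : K, x ∈ {x : K | (∃ u ∈ G, (u : K) = x) ∨ x = 0} ∨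
          -x ∈ {x : K | (∃ u ∈ G, (u : K) = x) ∨ x = 0}) ∧
       (∀ x : K, x ∈ {x : K | (∃ u ∈ G, (u : K) = x) ∨ x = 0} →
          -x ∈ {x : K | (∃ u ∈ G, (u : K) = x) ∨ x = 0} → x = 0)) := by
  classical
  obtain ⟨ε, hε, hball0⟩ := hopen 1 G.one_mem
  haveI : CharZero K := aov_charZero v harch
  obtain ⟨t, ht, hv⟩ := aov_pow v harch
  set S : Set K := {x : K | ∃ u ∈ G, (u : K) = x} with hS
  have hball : ∀ x : K, v (x - 1) < ε → x ∈ S := by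
    intro x hx
    exact hball0 x (by simpa using hx)
  have h1 : (1 : K) ∈ S := ⟨1, G.one_mem, rfl⟩
  have hmul : ∀ x ∈ S, ∀ y ∈ S, x * y ∈ S := by
    rintro x ⟨u, hu, rfl⟩ y ⟨w, hw, rfl⟩
    exact ⟨u * w, G.mul_mem hu hw, by simp⟩
  have hinv : ∀ x ∈ S, x⁻¹ ∈ S := by
    rintro x ⟨u, hu, rfl⟩
    exact ⟨u⁻¹, G.inv_mem hu, by simp⟩
  have hne : ∀ x ∈ S, x ≠ 0 := by
    rintro x ⟨u, hu, rfl⟩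
    exact u.ne_zero
  have htotal := aov_total v harch t ht hv S ε hε hball hmul h1 hinv
  have hposS := aov_posS v harch t ht hv S ε hε hball hmul h1 hinv
  by_cases hneg : (-1 : K) ∈ S
  · left
    ext x
    simp only [Subgroup.mem_top, iff_true]
    have hx : (x : K) ≠ 0 := x.ne_zero
    have hXS : (x : K) ∈ S := by
      rcases htotal x hx with h | ⟨r, hr, hlt⟩
      · exact h
      · have hmem : (-(x : K)) ∈ S := hposS (-(x : K)) r hr hlt
        have h2 := hmul _ hneg _ hmem
        rw [neg_one_mul, neg_neg] at h2
        exact h2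
    obtain ⟨u, hu, hux⟩ := hXS
    have : u = x := Units.ext hux
    rwa [← this]
  · right
    have hSpos : ∀ x ∈ S, ∃ r : ℚ, 0 < r ∧ v (x - (r : K)) < v ((r : ℚ) : K) := by
      intro x hxS
      have hx0 : x ≠ 0 := hne x hxS
      by_contra hnopos
      push_neg at hnopos
      by_cases hnx : ∃ r : ℚ, 0 < r ∧ v (-x - (r : K)) < v ((r : ℚ) : K)
      · obtain ⟨r, hr, hlt⟩ := hnx
        have hmem : (-x) ∈ S := hposS _ r hr hlt
        have h2 := hmul _ hmem _ (hinv x hxS)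
        rw [show (-x) * x⁻¹ = -1 by field_simp] at h2
        exact hneg h2
      · push_neg at hnx
        exact hneg (aov_noimag v harch t ht hv S ε hε hball hmul h1 x hx0
          (fun r hr => hnopos r hr) (fun r hr => hnx r hr))
    have hsum : ∀ x ∈ S, ∀ y ∈ S, x + y ∈ S := by
      intro x hx y hy
      have hx0 : x ≠ 0 := hne x hx
      have hd : y * x⁻¹ ∈ S := hmul _ hy _ (hinv x hx)
      obtain ⟨r, hr, hlt⟩ := hSpos _ hd
      have h1d : (1 + y * x⁻¹) ∈ S := by
        apply hposS _ (1 + r) (by linarith)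
        have heq : 1 + y * x⁻¹ - ((1 + r : ℚ) : K) = y * x⁻¹ - (r : K) := by
          push_cast; ring
        rw [heq]
        refine lt_of_lt_of_le hlt ?_
        rw [hv, hv]
        apply Real.rpow_le_rpow (abs_nonneg _) _ ht.le
        rw [abs_of_nonneg (by positivity : (0:ℝ) ≤ ((r:ℝ))),
          abs_of_nonneg (by push_cast; positivity : (0:ℝ) ≤ ((1 + r : ℚ) : ℝ))]
        push_cast; linarith
      have heq : x + y = x * (1 + y * x⁻¹) := by field_simp
      rw [heq]
      exact hmul _ hx _ h1d
    refine ⟨?_, ?_, ?_, ?_⟩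
    · intro x hx y hy
      simp only [Set.mem_setOf_eq] at hx hy ⊢
      rcases hx with hx | rfl
      · rcases hy with hy | rfl
        · exact Or.inl (hsum x hx y hy)
        · rw [add_zero]; exact Or.inl hx
      · rw [zero_add]; exact hy
    · intro x hx y hy
      simp only [Set.mem_setOf_eq] at hx hy ⊢
      rcases hx with hx | rfl
      · rcases hy with hy | rfl
        · exact Or.inl (hmul x hx y hy)
        · rw [mul_zero]; exact Or.inr rfl
      · rw [zero_mul]; exact Or.inr rfl
    · intro x
      simp only [Set.mem_setOf_eq]
      by_cases hx0 : x = 0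
      · exact Or.inl (Or.inr hx0)
      rcases htotal x hx0 with h | ⟨r, hr, hlt⟩
      · exact Or.inl (Or.inl h)
      · exact Or.inr (Or.inl (hposS _ r hr hlt))
    · intro x hx hnx
      simp only [Set.mem_setOf_eq] at hx hnx
      rcases hx with hx | hx0
      · rcases hnx with hnx | hnx0
        · exfalso
          have hx0 : x ≠ 0 := hne x hx
          have h2 := hmul _ hnx _ (hinv x hx)
          rw [show (-x) * x⁻¹ = -1 by field_simp] at h2
          exact hneg h2
        · exact neg_eq_zero.mp hnx0
      · exact hx0
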